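/- Let p be an odd prime and let s be an integer with 0 < s < p−1. Then the polynomial b_{1,s}(α) ∈ F_p[α] has degree (p−1)/2 and factorizes into a product of pairwise distinct linear factors over F_p; that is, b_{1,s}(α) has (p−1)/2 distinct roots in F_p, each simple. -/

import Mathlib

noncomputable def binomF {K : Type*} [Field K] (f : K) (m : ℕ) : K :=
  Polynomial.eval f (descPochhammer K m) / (m.factorial : K)

noncomputable def bPoly (p : ℕ) [Fact p.Prime] (r s : ℕ) : Polynomial (ZMod p) :=
  ∑ k ∈ Finset.range p,
    Polynomial.C ((-(r : ZMod p) / (s : ZMod p)) ^ k /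
        (((p - 1 - k).factorial : ZMod p) * (k.factorial : ZMod p))) *
      Polynomial.eval (Polynomial.C (r : ZMod p) * Polynomial.X - 1)
        (descPochhammer (Polynomial (ZMod p)) (p - 1 - k)) *
      Polynomial.eval (Polynomial.C (s : ZMod p) * Polynomial.X - 1)
        (descPochhammer (Polynomial (ZMod p)) k)

open Polynomial Finset


variable {R : Type*} [CommRing R]

/-- forward difference operator -/
def dd (f : ℕ → R) : ℕ → R := fun u => f (u+1) - f u

lemma dd_add (f g : ℕ → R) : dd (fun u => f u + g u) = fun u => dd f u + dd g u := by
  funext u; simp [dd]; ring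

lemma dd_iter_add (f g : ℕ → R) (e : ℕ) :
    dd^[e] (fun u => f u + g u) = fun u => dd^[e] f u + dd^[e] g u := by
  induction e generalizing f g with
  | zero => simp
  | succ e ih => rw [Function.iterate_succ_apply, Function.iterate_succ_apply, Function.iterate_succ_apply, dd_add, ih]

lemma dd_comp_succ (f : ℕ → R) : dd (fun u => f (u+1)) = fun u => dd f (u+1) := rfl

lemma dd_iter_comp_succ (f : ℕ → R) (e : ℕ) :
    dd^[e] (fun u => f (u+1)) = fun u => dd^[e] f (u+1) := by
  induction e generalizing f with
  | zero => simp
  | succ e ih =>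
    rw [Function.iterate_succ_apply, Function.iterate_succ_apply, dd_comp_succ, ih]

lemma dd_iter_zero_of_le {f : ℕ → R} {a b : ℕ} (hab : a ≤ b) (h : dd^[a] f = 0) :
    dd^[b] f = 0 := by
  obtain ⟨c, rfl⟩ := Nat.exists_eq_add_of_le hab
  rw [Nat.add_comm, Function.iterate_add_apply, h]
  clear h hab
  induction c with
  | zero => simp
  | succ c ih => rw [Function.iterate_succ_apply, show dd (0 : ℕ → R) = 0 by funext u; simp only [dd, Pi.zero_apply, sub_zero], ih]

lemma dd_leibniz (f g : ℕ → R) :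
    dd (fun u => f u * g u) = fun u => f (u+1) * dd g u + dd f u * g u := by
  funext u; simp [dd]; ring

lemma const_of_dd {g : ℕ → R} (h : dd g = 0) : ∀ u, g u = g 0 := by
  intro u
  induction u with
  | zero => rfl
  | succ u ih => have := congrFun h u; simp [dd, sub_eq_zero] at this; rw [this, ih]

lemma dd_iter_const_mul (c : R) (f : ℕ → R) (e : ℕ) :
    dd^[e] (fun u => f u * c) = fun u => dd^[e] f u * c := by
  induction e generalizing f with
  | zero => simp
  | succ e ih =>
    rw [Function.iterate_succ_apply, Function.iterate_succ_apply,
      show dd (fun u => f u * c) = fun u => dd f u * c by funext u; simp [dd]; ring, ih]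

/-- Leibniz: product of Δ-polynomials -/
lemma vanish_mul : ∀ (n a b : ℕ) (f g : ℕ → R), a + b ≤ n → dd^[a+1] f = 0 → dd^[b+1] g = 0 →
    dd^[a+b+1] (fun u => f u * g u) = 0 := by
  intro n
  induction n with
  | zero =>
    rintro a b f g h hf hg
    have ha : a = 0 := by omega
    have hb : b = 0 := by omega
    subst ha; subst hb
    have hgc := const_of_dd (by simpa using hg)
    have : (fun u => f u * g u) = fun u => f u * g 0 := by funext u; rw [hgc u]
    rw [this, dd_iter_const_mul]
    funext u
    simp only [Pi.zero_apply]
    have h0 : dd^[0+0+1] f u = 0 := by simpa using congrFun hf u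
    rw [h0, zero_mul]
  | succ n ih =>
    rintro a b f g h hf hg
    rcases Nat.eq_zero_or_pos b with rfl | hb
    · have hgc := const_of_dd (by simpa using hg)
      have : (fun u => f u * g u) = fun u => f u * g 0 := by funext u; rw [hgc u]
      rw [this, dd_iter_const_mul]
      funext u
      simp only [Pi.zero_apply]
      have h0 : dd^[a+0+1] f u = 0 := by simpa using congrFun hf u
      rw [h0, zero_mul]
    obtain ⟨b', rfl⟩ := Nat.exists_eq_add_of_lt hb
    simp only [Nat.zero_add] at *
    rcases Nat.eq_zero_or_pos a with rfl | ha
    · -- symmetric: f const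
      have hfc := const_of_dd (by simpa using hf)
      have : (fun u => f u * g u) = fun u => g u * f 0 := by funext u; rw [hfc u]; ring
      rw [this, dd_iter_const_mul]
      funext u
      simp only [Pi.zero_apply]
      have h0 : dd^[0+(b'+1)+1] g u = 0 := by simpa using congrFun hg u
      rw [h0, zero_mul]
    obtain ⟨a', rfl⟩ := Nat.exists_eq_add_of_lt ha
    simp only [Nat.zero_add] at *
    -- step
    have key : dd^[(a'+1)+(b'+1)+1] (fun u => f u * g u)
        = dd^[(a'+1)+(b'+1)] (dd (fun u => f u * g u)) := by
      rw [← Function.iterate_succ_apply]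
    rw [key, dd_leibniz, dd_iter_add]
    have h1 : dd^[(a'+1)+(b'+1)] (fun u => f (u+1) * dd g u) = 0 := by
      have e1 : dd^[a'+1+1] (fun u => f (u+1)) = 0 := by
        rw [dd_iter_comp_succ]; funext u; exact congrFun hf (u+1)
      have e2 : dd^[b'+1] (dd g) = 0 := by
        rw [← Function.iterate_succ_apply]; exact hg
      have := ih (a'+1) b' (fun u => f (u+1)) (dd g) (by omega) e1 e2
      have h2 : a'+1+b'+1 ≤ (a'+1)+(b'+1) := by omega
      exact dd_iter_zero_of_le h2 this
    have h2 : dd^[(a'+1)+(b'+1)] (fun u => dd f u * g u) = 0 := by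
      have := ih a' (b'+1) (dd f) g (by omega) (by rw [← Function.iterate_succ_apply]; exact hf) hg
      exact dd_iter_zero_of_le (by omega) this
    funext u
    simp [congrFun h1 u, congrFun h2 u]

lemma dd_iter_succ_point (f : ℕ → R) (e : ℕ) :
    dd^[e] f 1 = dd^[e] f 0 + dd^[e+1] f 0 := by
  rw [Function.iterate_succ_apply']
  simp [dd]

/-- Newton's forward-difference formula -/
lemma newton (f : ℕ → R) : ∀ n, f n = ∑ e ∈ range (n+1), (n.choose e : R) * dd^[e] f 0 := by
  intro n
  induction n generalizing f with
  | zero => simp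
  | succ n ih =>
    have h1 : f (n+1) = ∑ e ∈ range (n+1), (n.choose e : R) * dd^[e] (fun u => f (u+1)) 0 :=
      ih (fun u => f (u+1))
    have h2 : ∀ e, dd^[e] (fun u => f (u+1)) 0 = dd^[e] f 0 + dd^[e+1] f 0 := by
      intro e
      rw [dd_iter_comp_succ]
      exact dd_iter_succ_point f e
    rw [h1]
    simp_rw [h2, mul_add]
    rw [Finset.sum_add_distrib]
    rw [Finset.sum_range_succ' (fun e => (n.choose e : R) * dd^[e] f 0) n]
    rw [Finset.sum_range_succ' (fun e => ((n+1).choose e : R) * dd^[e] f 0) (n+1)]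
    rw [Finset.sum_range_succ (fun i => ((n+1).choose (i+1) : R) * dd^[i+1] f 0) n]
    have hz : ∀ m : ℕ, n < m → ((n.choose m : R) * dd^[m] f 0 = 0) := by
      intro m hm; rw [Nat.choose_eq_zero_of_lt hm]; simp
    rw [Finset.sum_range_succ (fun x => (n.choose x : R) * dd^[x+1] f 0) n]
    have pascal : ∀ k, (((n+1).choose (k+1) : ℕ) : R) = (n.choose (k+1) : R) + (n.choose k : R) := by
      intro k; rw [Nat.choose_succ_succ]; push_cast; ring
    simp only [pascal, add_mul]
    rw [Finset.sum_add_distrib]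
    simp only [Nat.choose_self, Nat.choose_zero_right, Nat.choose_succ_self, Nat.cast_one,
      Nat.cast_zero, Nat.cast_ofNat]
    ring

lemma sum_range_choose_diag (e : ℕ) : ∀ n : ℕ, ∑ u ∈ range n, u.choose e = n.choose (e+1) := by
  intro n
  induction n with
  | zero => simp
  | succ n ih => rw [Finset.sum_range_succ, ih, Nat.choose_succ_succ, Nat.add_comm]

lemma sum_newton (f : ℕ → R) (n : ℕ) :
    ∑ u ∈ range n, f u = ∑ e ∈ range n, (n.choose (e+1) : R) * dd^[e] f 0 := by
  have h1 : ∀ u ∈ range n, f u = ∑ e ∈ range n, (u.choose e : R) * dd^[e] f 0 := by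
    intro u hu
    rw [newton f u]
    apply Finset.sum_subset
    · intro x hx; simp only [Finset.mem_range] at *; omega
    · intro x _ hx
      simp only [Finset.mem_range, not_lt] at hx
      rw [Nat.choose_eq_zero_of_lt (by omega)]
      simp
  rw [Finset.sum_congr rfl h1, Finset.sum_comm]
  apply Finset.sum_congr rfl
  intro e _
  rw [← Finset.sum_mul, ← Nat.cast_sum, sum_range_choose_diag]
/-- elementary symmetric function of c 0, ..., c (u-1) -/
def ee (c : ℕ → R) : ℕ → ℕ → R
  | 0, _ => 1
  | _+1, 0 => 0
  | l+1, u+1 => ee c (l+1) u + c u * ee c l u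

@[simp] lemma ee_zero (c : ℕ → R) (u : ℕ) : ee c 0 u = 1 := by cases u <;> rfl
@[simp] lemma ee_succ_zero (c : ℕ → R) (l : ℕ) : ee c (l+1) 0 = 0 := rfl
lemma ee_succ_succ (c : ℕ → R) (l u : ℕ) :
    ee c (l+1) (u+1) = ee c (l+1) u + c u * ee c l u := rfl

lemma ee_eq_zero_of_lt (c : ℕ → R) : ∀ l u, u < l → ee c l u = 0 := by
  intro l
  induction l with
  | zero => omega
  | succ l ih =>
    intro u hu
    induction u with
    | zero => rfl
    | succ u ihu =>
      rw [ee_succ_succ, ihu (by omega), ih u (by omega)]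
      ring

lemma ee_smul (c : ℕ → R) (t : R) : ∀ l u, ee (fun i => c i * t) l u = ee c l u * t^l := by
  intro l
  induction l with
  | zero => simp
  | succ l ih =>
    intro u
    induction u with
    | zero => simp
    | succ u ihu => rw [ee_succ_succ, ee_succ_succ, ihu, ih]; ring

/-- the product ∏ (1 - c i • X) -/
noncomputable def Qp (c : ℕ → R) (u : ℕ) : Polynomial R :=
  ∏ i ∈ range u, (1 - Polynomial.C (c i) * Polynomial.X)

lemma Qp_succ (c : ℕ → R) (u : ℕ) : Qp c (u+1) = Qp c u * (1 - Polynomial.C (c u) * Polynomial.X) := by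
  rw [Qp, Finset.prod_range_succ]; rfl

lemma coeff_Qp (c : ℕ → R) : ∀ u l, (Qp c u).coeff l = (-1)^l * ee c l u := by
  intro u
  induction u with
  | zero =>
    intro l
    rcases l with _ | l
    · simp [Qp]
    · simp [Qp, Polynomial.coeff_one, ee_eq_zero_of_lt c (l+1) 0 (by omega)]
  | succ u ih =>
    intro l
    rw [Qp_succ, mul_sub, mul_one]
    rcases l with _ | l
    · rw [coeff_sub, ih 0]
      have : (Qp c u * (Polynomial.C (c u) * Polynomial.X)).coeff 0
          = (Qp c u).coeff 0 * (Polynomial.C (c u) * Polynomial.X).coeff 0 := mul_coeff_zero _ _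
      rw [this]
      simp [ih 0]
    · rw [coeff_sub, ih (l+1)]
      have : Qp c u * (Polynomial.C (c u) * Polynomial.X) = Polynomial.C (c u) * (Polynomial.X * Qp c u) := by ring
      rw [this, Polynomial.coeff_C_mul, Polynomial.coeff_X_mul, ih l, ee_succ_succ]
      ring
/-- the product ∏ (X - C (c i)) -/
noncomputable def Pr (c : ℕ → R) (u : ℕ) : Polynomial R :=
  ∏ i ∈ range u, (Polynomial.X - Polynomial.C (c i))

lemma Pr_succ (c : ℕ → R) (u : ℕ) :
    Pr c (u+1) = Pr c u * (Polynomial.X - Polynomial.C (c u)) := by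
  rw [Pr, Finset.prod_range_succ]; rfl

lemma monic_Pr (c : ℕ → R) (u : ℕ) [Nontrivial R] : (Pr c u).Monic :=
  monic_prod_of_monic _ _ (fun i _ => monic_X_sub_C (c i))

lemma natDegree_Pr (c : ℕ → R) (u : ℕ) [Nontrivial R] : (Pr c u).natDegree = u := by
  rw [Pr, natDegree_prod_of_monic _ _ (fun i _ => monic_X_sub_C (c i))]
  simp

lemma reverse_X_sub_C (a : R) [Nontrivial R] :
    (Polynomial.X - Polynomial.C a).reverse = 1 - Polynomial.C a * Polynomial.X := by
  unfold Polynomial.reverse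
  rw [natDegree_X_sub_C, Polynomial.reflect_sub, Polynomial.reflect_C,
    ← pow_one (Polynomial.X : Polynomial R), Polynomial.reflect_monomial,
    Polynomial.revAt_le (le_refl 1)]
  norm_num

lemma reverse_Pr {R : Type*} [CommRing R] [IsDomain R] (c : ℕ → R) (u : ℕ) :
    (Pr c u).reverse = Qp c u := by
  induction u with
  | zero =>
    show (1 : Polynomial R).reverse = 1
    unfold Polynomial.reverse
    simp
  | succ u ih =>
    rw [Pr_succ, Qp_succ, Polynomial.reverse_mul_of_domain, ih, reverse_X_sub_C]

lemma coeff_Pr_reverse {R : Type*} [CommRing R] [IsDomain R] (c : ℕ → R) (u m : ℕ) (hm : m ≤ u) :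
    (Pr c u).coeff m = (-1)^(u-m) * ee c (u-m) u := by
  have h1 : (Pr c u).reverse.coeff (u - m) = (Pr c u).coeff m := by
    rw [Polynomial.coeff_reverse, natDegree_Pr, Polynomial.revAt_le (by omega)]
    congr 1; omega
  rw [← h1, reverse_Pr, coeff_Qp]

section ZModP

variable (p : ℕ) [Fact p.Prime]

lemma prime_cast_ne_zero {k : ℕ} (h1 : 0 < k) (h2 : k < p) : (k : ZMod p) ≠ 0 := by
  intro h
  rw [ZMod.natCast_eq_zero_iff] at h
  have := Nat.le_of_dvd h1 h
  omega

/-- nodes 1, 2, 3, ... -/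
def c1 : ℕ → ZMod p := fun i => (i : ZMod p) + 1

/-- elementary symmetric functions of 1..u -/
def Ff : ℕ → ℕ → ZMod p := ee (c1 p)

/-- complete homogeneous symmetric functions of 1..u -/
def Hh : ℕ → ℕ → ZMod p
  | 0, _ => 1
  | _+1, 0 => 0
  | l+1, u+1 => Hh (l+1) u + ((u : ZMod p)+1) * Hh l (u+1)

@[simp] lemma Hh_zero (u : ℕ) : Hh p 0 u = 1 := by cases u <;> simp [Hh]
@[simp] lemma Hh_succ_zero (l : ℕ) : Hh p (l+1) 0 = 0 := by simp [Hh]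
lemma Hh_succ_succ (l u : ℕ) :
    Hh p (l+1) (u+1) = Hh p (l+1) u + ((u : ZMod p)+1) * Hh p l (u+1) := by rw [Hh]

lemma lin_dd : dd^[2] (fun u : ℕ => ((u : ZMod p)+1)) = 0 := by
  funext u
  simp only [Function.iterate_succ_apply, Function.iterate_zero_apply, dd, Pi.zero_apply]
  push_cast
  ring

lemma Ff_dd : ∀ l, dd^[2*l+1] (Ff p l) = 0 := by
  intro l
  induction l with
  | zero =>
    funext u
    simp [Ff, dd]
  | succ l ih =>
    have hd : dd (Ff p (l+1)) = fun u : ℕ => ((u : ZMod p)+1) * Ff p l u := by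
      funext u
      simp only [dd, Ff, ee_succ_succ]
      unfold c1
      ring
    have : dd^[2*(l+1)+1] (Ff p (l+1)) = dd^[2*l+2] (dd (Ff p (l+1))) := by
      rw [show 2*(l+1)+1 = (2*l+2)+1 by ring, Function.iterate_succ_apply]
    rw [this, hd]
    exact dd_iter_zero_of_le (by omega) (vanish_mul (2*l+2) 1 (2*l) _ _ (by omega) (lin_dd p) ih)

lemma Hh_dd : ∀ l, dd^[2*l+1] (Hh p l) = 0 := by
  intro l
  induction l with
  | zero =>
    funext u
    simp [dd]
  | succ l ih =>
    have hd : dd (Hh p (l+1)) = fun u : ℕ => ((u : ZMod p)+1) * Hh p l (u+1) := by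
      funext u
      simp only [dd, Hh_succ_succ]
      ring
    have hshift : dd^[2*l+1] (fun u => Hh p l (u+1)) = 0 := by
      rw [dd_iter_comp_succ]
      funext u
      rw [congrFun ih (u+1)]
      rfl
    have : dd^[2*(l+1)+1] (Hh p (l+1)) = dd^[2*l+2] (dd (Hh p (l+1))) := by
      rw [show 2*(l+1)+1 = (2*l+2)+1 by ring, Function.iterate_succ_apply]
    rw [this, hd]
    exact dd_iter_zero_of_le (by omega)
      (vanish_mul (2*l+2) 1 (2*l) _ _ (by omega) (lin_dd p) hshift)

lemma prod_univ_X_sub_C : ∏ a : ZMod p, (Polynomial.X - Polynomial.C a)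
    = Polynomial.X^p - Polynomial.X := by
  have hp1 : 1 < p := (Fact.out : p.Prime).one_lt
  have hmonic : (Polynomial.X^p - Polynomial.X : Polynomial (ZMod p)).Monic := by
    apply Polynomial.monic_X_pow_sub
    rw [Polynomial.degree_X]
    exact_mod_cast hp1
  have hroots : (Polynomial.X^p - Polynomial.X : Polynomial (ZMod p)).roots
      = (Finset.univ : Finset (ZMod p)).val := by
    have := FiniteField.roots_X_pow_card_sub_X (ZMod p)
    rwa [ZMod.card p] at this
  have hcard : Multiset.card (Polynomial.X^p - Polynomial.X : Polynomial (ZMod p)).roots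
      = (Polynomial.X^p - Polynomial.X : Polynomial (ZMod p)).natDegree := by
    rw [hroots, FiniteField.X_pow_card_sub_X_natDegree_eq _ hp1]
    simpa using ZMod.card p
  have := Polynomial.prod_multiset_X_sub_C_of_monic_of_roots_card_eq hmonic hcard
  rw [hroots] at this
  rw [← this]
  rfl

lemma prod_nonzero_X_sub_C :
    ∏ a ∈ (Finset.univ : Finset (ZMod p)).erase 0, (Polynomial.X - Polynomial.C a)
    = Polynomial.X^(p-1) - 1 := by
  have hp1 : 1 < p := (Fact.out : p.Prime).one_lt
  have h1 : Polynomial.X^p - Polynomial.X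
      = (Polynomial.X - Polynomial.C (0 : ZMod p)) *
        ∏ a ∈ (Finset.univ : Finset (ZMod p)).erase 0, (Polynomial.X - Polynomial.C a) := by
    rw [← prod_univ_X_sub_C p]
    exact (Finset.mul_prod_erase _ _ (Finset.mem_univ 0)).symm
  have h2 : Polynomial.X^p - Polynomial.X
      = (Polynomial.X : Polynomial (ZMod p)) * (Polynomial.X^(p-1) - 1) := by
    rw [mul_sub, mul_one, ← pow_succ', show (p-1)+1 = p by omega]
  apply mul_left_cancel₀ (Polynomial.X_ne_zero : (Polynomial.X : Polynomial (ZMod p)) ≠ 0)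
  rw [← h2, h1]
  simp

/-- ∏_{i<p-1} (X - (i+1)) = X^(p-1) - 1 over ZMod p -/
lemma Pr_c1_top : Pr (c1 p) (p-1) = Polynomial.X^(p-1) - 1 := by
  rw [← prod_nonzero_X_sub_C, Pr]
  refine Finset.prod_nbij (fun i => ((i : ZMod p) + 1)) ?_ ?_ ?_ ?_
  · intro i hi
    simp only [Finset.mem_range] at hi
    simp only [Finset.mem_erase, Finset.mem_univ, and_true]
    have : ((i+1 : ℕ) : ZMod p) ≠ 0 := prime_cast_ne_zero p (by omega) (by omega)
    simpa using this
  · intro i hi j hj hij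
    simp only [Finset.coe_range, Set.mem_Iio] at hi hj
    have : ((i+1 : ℕ) : ZMod p) = ((j+1 : ℕ) : ZMod p) := by push_cast; simpa using hij
    have := congrArg ZMod.val this
    rwa [ZMod.val_cast_of_lt (by omega), ZMod.val_cast_of_lt (by omega), Nat.add_right_cancel_iff] at this
  · intro a ha
    simp only [Finset.coe_erase, Set.mem_diff, Finset.coe_univ, Set.mem_univ, true_and,
      Set.mem_singleton_iff] at ha
    refine ⟨a.val - 1, ?_, ?_⟩
    · simp only [Finset.coe_range, Set.mem_Iio]
      have h1 : a.val < p := ZMod.val_lt a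
      have h2 : a.val ≠ 0 := by
        intro h
        apply ha
        have := ZMod.natCast_rightInverse (n := p) a
        rw [← this, h]
        simp
      omega
    · have h2 : a.val ≠ 0 := by
        intro h
        apply ha
        have := ZMod.natCast_rightInverse (n := p) a
        rw [← this, h]
        simp
      show ((a.val - 1 : ℕ) : ZMod p) + 1 = a
      have : ((a.val - 1 : ℕ) : ZMod p) + 1 = ((a.val - 1 + 1 : ℕ) : ZMod p) := by push_cast; ring
      rw [this, show a.val - 1 + 1 = a.val by omega]
      exact ZMod.natCast_rightInverse a
  · intro i hi
    rfl

lemma Ff_top {l : ℕ} (h1 : 0 < l) (h2 : l < p-1) : Ff p l (p-1) = 0 := by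
  have := coeff_Qp (c1 p) (p-1) l
  rw [← reverse_Pr, Pr_c1_top] at this
  have hrev : (Polynomial.X^(p-1) - 1 : Polynomial (ZMod p)).reverse
      = 1 - Polynomial.X^(p-1) := by
    have hp1 : 1 < p := (Fact.out : p.Prime).one_lt
    have hd : (Polynomial.X^(p-1) - 1 : Polynomial (ZMod p)).natDegree = p-1 := by
      have := Polynomial.natDegree_X_pow_sub_C (n := p-1) (r := (1 : ZMod p))
      simpa using this
    unfold Polynomial.reverse
    rw [hd, show (Polynomial.X^(p-1) - 1 : Polynomial (ZMod p))
        = Polynomial.X^(p-1) - Polynomial.C 1 by rw [Polynomial.C_1],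
      Polynomial.reflect_sub, Polynomial.reflect_C, Polynomial.reflect_monomial,
      Polynomial.revAt_le (le_refl (p-1))]
    simp
  rw [hrev] at this
  have hc : (1 - Polynomial.X^(p-1) : Polynomial (ZMod p)).coeff l = 0 := by
    rw [Polynomial.coeff_sub, Polynomial.coeff_one, Polynomial.coeff_X_pow]
    have : l ≠ 0 := by omega
    have : l ≠ p-1 := by omega
    simp_all
  rw [hc] at this
  have := this.symm
  rcases mul_eq_zero.mp this with h | h
  · exact absurd h (pow_ne_zero l (neg_ne_zero.mpr one_ne_zero))
  · exact h

/-- reflection: e_l(1..p-1-u) = h_l(1..u) mod p -/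
lemma Ff_reflect : ∀ l, l ≤ p-2 → ∀ u, u ≤ p-1 → Ff p l (p-1-u) = Hh p l u := by
  intro l
  induction l with
  | zero => intro _ u _; simp [Ff]
  | succ l ih =>
    intro hl
    intro u
    induction u with
    | zero =>
      intro _
      rw [Nat.sub_zero, Hh_succ_zero]
      exact Ff_top p (by omega) (by have := (Fact.out : p.Prime).two_le; omega)
    | succ u ihu =>
      intro hu
      have hu' : u ≤ p-1 := by omega
      have key : p-1-u = (p-1-(u+1))+1 := by
        have := (Fact.out : p.Prime).two_le
        omega
      have hrec : Ff p (l+1) (p-1-u) = Ff p (l+1) (p-1-(u+1)) + c1 p (p-1-(u+1)) * Ff p l (p-1-(u+1)) := by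
        rw [key]
        exact ee_succ_succ _ _ _
      have hcast : c1 p (p-1-(u+1)) = -((u : ZMod p)+1) := by
        unfold c1
        have h2 : ((p : ℕ) : ZMod p) = 0 := by simp
        have : ((p-1-(u+1) : ℕ) : ZMod p) = (p : ZMod p) - (u+2 : ℕ) := by
          have := (Fact.out : p.Prime).two_le
          have hle : u+2 ≤ p := by omega
          rw [show p-1-(u+1) = p - (u+2) by omega, Nat.cast_sub hle]
        rw [this, h2]
        push_cast
        ring
      rw [Hh_succ_succ, ← ihu hu', ← ih (by omega) (u+1) hu]
      rw [hrec, hcast]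
      ring

/-- key summation: sum over range p equals (p-1)-th difference at 0 -/
lemma sum_range_p (f : ℕ → ZMod p) : ∑ u ∈ range p, f u = dd^[p-1] f 0 := by
  rw [sum_newton]
  have hp2 := (Fact.out : p.Prime).two_le
  have hr : range p = range ((p-1)+1) := by rw [show (p-1)+1 = p by omega]
  rw [hr, Finset.sum_range_succ, show (p-1)+1 = p by omega]
  have h0 : ∀ e ∈ range (p-1), (p.choose (e+1) : ZMod p) * dd^[e] f 0 = 0 := by
    intro e he
    simp only [Finset.mem_range] at he
    have : (p.choose (e+1) : ZMod p) = 0 := by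
      rw [ZMod.natCast_eq_zero_iff]
      exact (Fact.out : p.Prime).dvd_choose_self (by omega) (by omega)
    rw [this, zero_mul]
  rw [Finset.sum_eq_zero h0, Nat.choose_self]
  simp

lemma sum_eq_zero_of_dd {f : ℕ → ZMod p} {m : ℕ} (hm : m ≤ p-1) (h : dd^[m] f = 0) :
    ∑ u ∈ range p, f u = 0 := by
  rw [sum_range_p, congrFun (dd_iter_zero_of_le hm h) 0]
  rfl

end ZModP
section Main

variable (p : ℕ) [Fact p.Prime] (s : ℕ)

/-- scaled nodes (i+1)/s -/
noncomputable def c2 : ℕ → ZMod p := fun i => ((i : ZMod p) + 1) * ((s : ZMod p))⁻¹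

lemma evalDesc (a : ZMod p) (n : ℕ) :
    Polynomial.eval (Polynomial.C a * Polynomial.X - 1)
      (descPochhammer (Polynomial (ZMod p)) n)
    = ∏ i ∈ range n, (Polynomial.C a * Polynomial.X - Polynomial.C ((i : ZMod p)+1)) := by
  induction n with
  | zero => simp
  | succ n ih =>
    rw [descPochhammer_succ_eval, ih, Finset.prod_range_succ]
    congr 1
    rw [← Polynomial.C_eq_natCast, map_add, Polynomial.C_1]
    ring

lemma factorial_pair : ∀ k, k ≤ p-1 →
    (((p-1-k).factorial : ZMod p) * (k.factorial : ZMod p)) = (-1)^(k+1) := by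
  intro k
  induction k with
  | zero => simpa using ZMod.wilsons_lemma p
  | succ k ih =>
    intro hk
    have hA := ih (by omega)
    have h1 : p-1-k = (p-1-(k+1))+1 := by omega
    have hcast : ((p-1-k : ℕ) : ZMod p) = -((k : ZMod p)+1) := by
      have hle : k+1 ≤ p := by omega
      rw [show p-1-k = p - (k+1) by omega, Nat.cast_sub hle]
      push_cast
      simp
    have hne : ((k : ZMod p)+1) ≠ 0 := by
      have : (((k+1 : ℕ)) : ZMod p) ≠ 0 := prime_cast_ne_zero p (by omega) (by omega)
      push_cast at this
      exact this
    have hfac : ((p-1-k).factorial : ZMod p)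
        = ((p-1-k : ℕ) : ZMod p) * ((p-1-(k+1)).factorial : ZMod p) := by
      rw [h1, Nat.factorial_succ, ← h1]
      push_cast
      ring
    have hfac2 : (((k+1).factorial : ℕ) : ZMod p) = ((k : ZMod p)+1) * (k.factorial : ZMod p) := by
      rw [Nat.factorial_succ]
      push_cast
      ring
    have key : ((k:ZMod p)+1) * (((p-1-(k+1)).factorial : ZMod p) * (((k+1).factorial : ℕ) : ZMod p))
        = ((k:ZMod p)+1) * (-1)^(k+1+1) := by
      rw [show k+1+1 = (k+1)+1 from rfl, pow_succ]
      linear_combination (((k:ZMod p)+1) * ((p-1-(k+1)).factorial : ZMod p)) * hfac2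
        - ((k:ZMod p)+1) * hA
        + (((k:ZMod p)+1) * (k.factorial : ZMod p)) * hfac
        + (((k:ZMod p)+1) * ((p-1-(k+1)).factorial : ZMod p) * (k.factorial : ZMod p)) * hcast
    have := mul_left_cancel₀ hne key
    exact this

lemma bPoly_eq (hs0 : 0 < s) (hsp : s < p) :
    bPoly p 1 s = -∑ u ∈ range p, Pr (c1 p) (p-1-u) * Pr (c2 p s) u := by
  have hsne : ((s : ℕ) : ZMod p) ≠ 0 := prime_cast_ne_zero p hs0 hsp
  rw [bPoly, ← Finset.sum_neg_distrib]
  apply Finset.sum_congr rfl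
  intro k hk
  simp only [Finset.mem_range] at hk
  rw [evalDesc, evalDesc]
  have h2 : ∀ i ∈ range k, Polynomial.C ((s:ZMod p)) * Polynomial.X - Polynomial.C ((i : ZMod p)+1)
      = Polynomial.C ((s:ZMod p)) * (Polynomial.X - Polynomial.C (c2 p s i)) := by
    intro i _
    rw [mul_sub, ← Polynomial.C_mul, c2]
    congr 2
    field_simp
  have h1 : ∀ i ∈ range (p-1-k), Polynomial.C (((1:ℕ):ZMod p)) * Polynomial.X - Polynomial.C ((i : ZMod p)+1)
      = Polynomial.X - Polynomial.C (c1 p i) := by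
    intro i _
    rw [Nat.cast_one, Polynomial.C_1, one_mul]
    rfl
  rw [Finset.prod_congr rfl h2, Finset.prod_congr rfl h1, Finset.prod_mul_distrib,
    Finset.prod_const, Finset.card_range]
  have hPr1 : ∏ i ∈ range (p-1-k), (Polynomial.X - Polynomial.C (c1 p i)) = Pr (c1 p) (p-1-k) := rfl
  have hPr2 : ∏ i ∈ range k, (Polynomial.X - Polynomial.C (c2 p s i)) = Pr (c2 p s) k := rfl
  rw [hPr1, hPr2]
  have hconst : (-((1:ℕ) : ZMod p) / ((s:ℕ) : ZMod p)) ^ k /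
        (((p - 1 - k).factorial : ZMod p) * ((k.factorial : ℕ) : ZMod p)) * ((s:ZMod p))^k
      = -1 := by
    rw [factorial_pair p k (by omega), Nat.cast_one]
    have e1 : (-(1:ZMod p) / ((s:ℕ):ZMod p))^k * (((s:ℕ):ZMod p))^k = (-1)^k := by
      rw [← mul_pow, div_mul_cancel₀ _ hsne]
    have hm1 : ((-1:ZMod p))^k ≠ 0 := pow_ne_zero _ (neg_ne_zero.mpr one_ne_zero)
    calc (-(1:ZMod p) / ((s:ℕ):ZMod p))^k / (-1:ZMod p)^(k+1) * (((s:ℕ):ZMod p))^k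
        = ((-(1:ZMod p) / ((s:ℕ):ZMod p))^k * (((s:ℕ):ZMod p))^k) / ((-1:ZMod p)^k * (-1)) := by
          rw [pow_succ]; ring
      _ = ((-1:ZMod p))^k / ((-1:ZMod p)^k * (-1)) := by rw [e1]
      _ = -1 := by
          rw [div_mul_eq_div_div, div_self hm1]
          norm_num
  have hc : Polynomial.C ((-((1:ℕ) : ZMod p) / ((s:ℕ) : ZMod p)) ^ k /
        (((p - 1 - k).factorial : ZMod p) * ((k.factorial : ℕ) : ZMod p)))
      * (Polynomial.C ((s:ZMod p)))^k = -1 := by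
    rw [← Polynomial.C_pow, ← Polynomial.C_mul, hconst]
    simp
  calc Polynomial.C ((-((1:ℕ) : ZMod p) / ((s:ℕ) : ZMod p)) ^ k /
        (((p - 1 - k).factorial : ZMod p) * ((k.factorial : ℕ) : ZMod p)))
      * Pr (c1 p) (p-1-k) * ((Polynomial.C ((s:ZMod p)))^k * Pr (c2 p s) k)
      = (Polynomial.C ((-((1:ℕ) : ZMod p) / ((s:ℕ) : ZMod p)) ^ k /
        (((p - 1 - k).factorial : ZMod p) * ((k.factorial : ℕ) : ZMod p)))
      * (Polynomial.C ((s:ZMod p)))^k) * (Pr (c1 p) (p-1-k) * Pr (c2 p s) k) := by ring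
    _ = -(Pr (c1 p) (p-1-k) * Pr (c2 p s) k) := by rw [hc]; ring

end Main
section Final

variable (p : ℕ) [Fact p.Prime] (s : ℕ)

lemma coeff_b (hodd : Odd p) (hs0 : 0 < s) (hsp : s < p) :
    ∀ m, (p-1)/2 < m → (bPoly p 1 s).coeff m = 0 := by
  intro m hm
  have hp2 := (Fact.out : p.Prime).two_le
  rw [bPoly_eq p s hs0 hsp, Polynomial.coeff_neg, Polynomial.finset_sum_coeff, neg_eq_zero]
  by_cases hmp : p-1 < m
  · apply Finset.sum_eq_zero
    intro u hu
    simp only [Finset.mem_range] at hu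
    apply Polynomial.coeff_eq_zero_of_natDegree_lt
    calc (Pr (c1 p) (p-1-u) * Pr (c2 p s) u).natDegree
        ≤ (Pr (c1 p) (p-1-u)).natDegree + (Pr (c2 p s) u).natDegree := Polynomial.natDegree_mul_le
      _ ≤ p-1 := by rw [natDegree_Pr, natDegree_Pr]; omega
      _ < m := hmp
  · push_neg at hmp
    set r := p-1-m with hr
    obtain ⟨w, hw⟩ := hodd
    have hrle : 2*r+1 ≤ p-1 := by omega
    have hper : ∀ u ∈ range p, (Pr (c1 p) (p-1-u) * Pr (c2 p s) u).coeff m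
        = ∑ x ∈ Finset.HasAntidiagonal.antidiagonal r,
            (-1:ZMod p)^r * (((s:ZMod p))⁻¹)^x.2 * (Ff p x.1 (p-1-u) * Ff p x.2 u) := by
      intro u hu
      simp only [Finset.mem_range] at hu
      have hdeg : (Pr (c1 p) (p-1-u) * Pr (c2 p s) u).natDegree = p-1 := by
        rw [Polynomial.natDegree_mul (monic_Pr _ _).ne_zero (monic_Pr _ _).ne_zero,
          natDegree_Pr, natDegree_Pr]
        omega
      have hrev : (Pr (c1 p) (p-1-u) * Pr (c2 p s) u).coeff m
          = ((Pr (c1 p) (p-1-u) * Pr (c2 p s) u).reverse).coeff r := by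
        rw [Polynomial.coeff_reverse, hdeg, Polynomial.revAt_le (by omega)]
        congr 1
        omega
      rw [hrev, Polynomial.reverse_mul_of_domain, reverse_Pr, reverse_Pr, Polynomial.coeff_mul]
      apply Finset.sum_congr rfl
      intro x hx
      rw [Finset.HasAntidiagonal.mem_antidiagonal] at hx
      rw [coeff_Qp, coeff_Qp]
      have hc2 : ee (c2 p s) x.2 u = ee (c1 p) x.2 u * (((s:ZMod p))⁻¹)^x.2 := by
        have : c2 p s = fun i => (c1 p i) * ((s:ZMod p))⁻¹ := rfl
        rw [this, ee_smul]
      rw [hc2]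
      have hsign : (-1:ZMod p)^x.1 * (-1:ZMod p)^x.2 = (-1:ZMod p)^r := by
        rw [← pow_add, hx]
      rw [← hsign]
      show _ = (-1:ZMod p)^x.1 * (-1:ZMod p)^x.2 * (((s:ZMod p))⁻¹)^x.2 * (Ff p x.1 (p-1-u) * Ff p x.2 u)
      unfold Ff
      ring
    rw [Finset.sum_congr rfl hper, Finset.sum_comm]
    apply Finset.sum_eq_zero
    intro x hx
    rw [Finset.HasAntidiagonal.mem_antidiagonal] at hx
    have hf : ∀ u ∈ range p,
        (-1:ZMod p)^r * (((s:ZMod p))⁻¹)^x.2 * (Ff p x.1 (p-1-u) * Ff p x.2 u)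
        = (-1:ZMod p)^r * (((s:ZMod p))⁻¹)^x.2 * (Hh p x.1 u * Ff p x.2 u) := by
      intro u hu
      simp only [Finset.mem_range] at hu
      rw [Ff_reflect p x.1 (by omega) u (by omega)]
    rw [Finset.sum_congr rfl hf, ← Finset.mul_sum]
    have hz : ∑ u ∈ range p, Hh p x.1 u * Ff p x.2 u = 0 := by
      apply sum_eq_zero_of_dd p (m := 2*x.1 + 2*x.2 + 1) (by omega)
      exact vanish_mul (2*x.1+2*x.2) (2*x.1) (2*x.2) (Hh p x.1) (Ff p x.2)
        (le_refl _) (Hh_dd p x.1) (Ff_dd p x.2)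
    rw [hz, mul_zero]

lemma eval_b_root (hs0 : 0 < s) (hsp : s < p) (a : ZMod p) (ha : a ≠ 0)
    (hlt : a.val + ((s:ZMod p)*a).val < p) :
    Polynomial.eval a (bPoly p 1 s) = 0 := by
  have hsne : ((s:ℕ):ZMod p) ≠ 0 := prime_cast_ne_zero p hs0 hsp
  rw [bPoly_eq p s hs0 hsp, Polynomial.eval_neg, Polynomial.eval_finset_sum, neg_eq_zero]
  apply Finset.sum_eq_zero
  intro u hu
  simp only [Finset.mem_range] at hu
  rw [Polynomial.eval_mul]
  have hsa : ((s:ZMod p)*a) ≠ 0 := mul_ne_zero hsne ha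
  have hva : 0 < a.val := by
    rcases Nat.eq_zero_or_pos a.val with h | h
    · exfalso; apply ha
      have := ZMod.natCast_rightInverse (n := p) a
      rw [← this, h]; simp
    · exact h
  have hvsa : 0 < ((s:ZMod p)*a).val := by
    rcases Nat.eq_zero_or_pos ((s:ZMod p)*a).val with h | h
    · exfalso; apply hsa
      have := ZMod.natCast_rightInverse (n := p) ((s:ZMod p)*a)
      rw [← this, h]; simp
    · exact h
  have hvalt : a.val < p := ZMod.val_lt a
  by_cases hc : a.val ≤ p-1-u
  · have hz : Polynomial.eval a (Pr (c1 p) (p-1-u)) = 0 := by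
      rw [Pr, Polynomial.eval_prod]
      apply Finset.prod_eq_zero (Finset.mem_range.mpr (show a.val - 1 < p-1-u by omega))
      rw [Polynomial.eval_sub, Polynomial.eval_X, Polynomial.eval_C]
      have hc1 : c1 p (a.val - 1) = a := by
        show ((a.val - 1 : ℕ) : ZMod p) + 1 = a
        rw [show ((a.val - 1:ℕ):ZMod p) + 1 = ((a.val - 1 + 1 : ℕ) : ZMod p) by push_cast; ring,
          show a.val - 1 + 1 = a.val by omega]
        exact ZMod.natCast_rightInverse a
      rw [hc1, sub_self]
    rw [hz, zero_mul]
  · have hb : ((s:ZMod p)*a).val ≤ u := by omega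
    have hz : Polynomial.eval a (Pr (c2 p s) u) = 0 := by
      rw [Pr, Polynomial.eval_prod]
      apply Finset.prod_eq_zero
        (Finset.mem_range.mpr (show ((s:ZMod p)*a).val - 1 < u by omega))
      rw [Polynomial.eval_sub, Polynomial.eval_X, Polynomial.eval_C]
      have hc2 : c2 p s (((s:ZMod p)*a).val - 1) = a := by
        show (((((s:ZMod p)*a).val - 1 : ℕ) : ZMod p) + 1) * ((s : ZMod p))⁻¹ = a
        have h2 : ((((s:ZMod p)*a).val - 1 : ℕ) : ZMod p) + 1 = (s:ZMod p)*a := by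
          rw [show ((((s:ZMod p)*a).val - 1:ℕ):ZMod p) + 1
              = ((((s:ZMod p)*a).val - 1 + 1 : ℕ) : ZMod p) by push_cast; ring,
            show ((s:ZMod p)*a).val - 1 + 1 = ((s:ZMod p)*a).val by omega]
          exact ZMod.natCast_rightInverse _
        rw [h2]
        field_simp
      rw [hc2, sub_self]
    rw [hz, mul_zero]

lemma s_ne_neg_one (hs0 : 0 < s) (hsp : s < p-1) : ((s:ℕ):ZMod p) ≠ -1 := by
  have hp2 := (Fact.out : p.Prime).two_le
  intro h
  have h1 : ((s:ℕ):ZMod p).val = s := ZMod.val_cast_of_lt (by omega)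
  have h2 : ((-1 : ZMod p)).val = p-1 := by
    have := ZMod.val_neg_one (p-1)
    rwa [show (p-1).succ = p by omega] at this
  rw [h] at h1
  omega

lemma eval_b_zero (hodd : Odd p) (hs0 : 0 < s) (hsp : s < p-1) :
    Polynomial.eval 0 (bPoly p 1 s) = 1 := by
  have hp2 := (Fact.out : p.Prime).two_le
  obtain ⟨w, hw⟩ := hodd
  have hsne : ((s:ℕ):ZMod p) ≠ 0 := prime_cast_ne_zero p hs0 (by omega)
  rw [bPoly_eq p s hs0 (by omega), Polynomial.eval_neg, Polynomial.eval_finset_sum]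
  have e1 : ∀ n : ℕ, ∏ i ∈ range n, Polynomial.eval 0 (Polynomial.X - Polynomial.C (c1 p i))
      = (-1:ZMod p)^n * (n.factorial : ZMod p) := by
    intro n
    have h : ∀ i ∈ range n, Polynomial.eval 0 (Polynomial.X - Polynomial.C (c1 p i))
        = (-1) * ((i+1 : ℕ) : ZMod p) := by
      intro i _
      rw [Polynomial.eval_sub, Polynomial.eval_X, Polynomial.eval_C]
      show (0:ZMod p) - ((i:ZMod p)+1) = _
      push_cast
      ring
    rw [Finset.prod_congr rfl h, Finset.prod_mul_distrib, Finset.prod_const, Finset.card_range,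
      ← Nat.cast_prod, Finset.prod_range_add_one_eq_factorial]
  have e2 : ∀ n : ℕ, ∏ i ∈ range n, Polynomial.eval 0 (Polynomial.X - Polynomial.C (c2 p s i))
      = (-1:ZMod p)^n * (n.factorial : ZMod p) * ((((s:ℕ):ZMod p))⁻¹)^n := by
    intro n
    have h : ∀ i ∈ range n, Polynomial.eval 0 (Polynomial.X - Polynomial.C (c2 p s i))
        = ((-1) * ((i+1 : ℕ) : ZMod p)) * (((s:ℕ):ZMod p))⁻¹ := by
      intro i _
      rw [Polynomial.eval_sub, Polynomial.eval_X, Polynomial.eval_C]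
      show (0:ZMod p) - ((i:ZMod p)+1) * (((s:ℕ):ZMod p))⁻¹ = _
      push_cast
      ring
    rw [Finset.prod_congr rfl h, Finset.prod_mul_distrib, Finset.prod_mul_distrib,
      Finset.prod_const, Finset.prod_const, Finset.card_range,
      ← Nat.cast_prod, Finset.prod_range_add_one_eq_factorial]
  have hterm : ∀ u ∈ range p, Polynomial.eval 0 (Pr (c1 p) (p-1-u) * Pr (c2 p s) u)
      = (-1) * (-(((s:ℕ):ZMod p))⁻¹)^u := by
    intro u hu
    simp only [Finset.mem_range] at hu
    rw [Polynomial.eval_mul, Pr, Pr, Polynomial.eval_prod, Polynomial.eval_prod, e1, e2]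
    have hfp : ((p-1-u).factorial : ZMod p) * (u.factorial : ZMod p) = (-1:ZMod p)^(u+1) :=
      factorial_pair p u (by omega)
    have hsign : (-1:ZMod p)^(p-1-u) * (-1:ZMod p)^u = 1 := by
      rw [← pow_add, show p-1-u+u = p-1 by omega]
      exact Even.neg_one_pow ⟨w, by omega⟩
    calc (-1:ZMod p)^(p-1-u) * ((p-1-u).factorial : ZMod p)
          * ((-1:ZMod p)^u * (u.factorial : ZMod p) * ((((s:ℕ):ZMod p))⁻¹)^u)
        = ((-1:ZMod p)^(p-1-u) * (-1:ZMod p)^u)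
          * (((p-1-u).factorial : ZMod p) * (u.factorial : ZMod p)) * ((((s:ℕ):ZMod p))⁻¹)^u := by
          ring
      _ = (-1:ZMod p)^(u+1) * ((((s:ℕ):ZMod p))⁻¹)^u := by rw [hsign, hfp, one_mul]
      _ = (-1) * (-(((s:ℕ):ZMod p))⁻¹)^u := by
          rw [pow_succ, neg_pow]
          ring
  rw [Finset.sum_congr rfl hterm, ← Finset.mul_sum, neg_mul, neg_neg, one_mul]
  have hx : (-(((s:ℕ):ZMod p))⁻¹) ≠ 1 := by
    intro h
    have h1 : (((s:ℕ):ZMod p))⁻¹ = -1 := by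
      rw [← neg_neg ((((s:ℕ):ZMod p))⁻¹), h]
    have h2 : ((s:ℕ):ZMod p) = -1 := by
      have := congrArg Inv.inv h1
      rwa [inv_inv, show ((-1:ZMod p))⁻¹ = -1 by
        rw [inv_eq_one_div]
        field_simp] at this
    exact s_ne_neg_one p s hs0 hsp h2
  rw [geom_sum_eq hx p, ZMod.pow_card, div_self (sub_ne_zero.mpr hx)]

lemma card_roots_set (hodd : Odd p) (hs0 : 0 < s) (hsp : s < p-1) :
    ((Finset.univ.filter (fun a : ZMod p => a ≠ 0)).filter
      (fun a => a.val + ((s:ZMod p)*a).val < p)).card = (p-1)/2 := by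
  have hp2 := (Fact.out : p.Prime).two_le
  have hsne : ((s:ℕ):ZMod p) ≠ 0 := prime_cast_ne_zero p hs0 (by omega)
  set N := Finset.univ.filter (fun a : ZMod p => a ≠ 0) with hN
  set A := N.filter (fun a => a.val + ((s:ZMod p)*a).val < p) with hA
  set B := N.filter (fun a => ¬(a.val + ((s:ZMod p)*a).val < p)) with hB
  have hvalpos : ∀ a : ZMod p, a ≠ 0 → 0 < a.val := by
    intro a ha
    rcases Nat.eq_zero_or_pos a.val with h | h
    · exfalso; apply ha
      have := ZMod.natCast_rightInverse (n := p) a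
      rw [← this, h]; simp
    · exact h
  have hsum : ∀ a : ZMod p, a ≠ 0 →
      (a.val + ((s:ZMod p)*a).val) + ((-a).val + ((s:ZMod p)*(-a)).val) = 2*p := by
    intro a ha
    have hsa : ((s:ZMod p)*a) ≠ 0 := mul_ne_zero hsne ha
    have h1 : (-a).val = p - a.val := by rw [ZMod.neg_val, if_neg ha]
    have h2 : ((s:ZMod p)*(-a)) = -((s:ZMod p)*a) := by ring
    rw [h2, h1, ZMod.neg_val, if_neg hsa]
    have l1 := ZMod.val_lt a
    have l2 := ZMod.val_lt ((s:ZMod p)*a)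
    have l3 := hvalpos a ha
    have l4 := hvalpos _ hsa
    omega
  have hkey : ∀ a : ZMod p, a ≠ 0 → a.val + ((s:ZMod p)*a).val ≠ p := by
    intro a ha h
    have hsa : ((s:ZMod p)*a) ≠ 0 := mul_ne_zero hsne ha
    have h1 : ((s:ZMod p)*a).val = (-a).val := by
      rw [ZMod.neg_val, if_neg ha]
      have := ZMod.val_lt a
      omega
    have h2 : (s:ZMod p)*a = -a := by
      have e1 := ZMod.natCast_rightInverse (n := p) ((s:ZMod p)*a)
      have e2 := ZMod.natCast_rightInverse (n := p) (-a)
      rw [← e1, ← e2, h1]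
    have h3 : ((s:ZMod p) + 1) * a = 0 := by
      rw [add_mul, one_mul, h2]
      ring
    rcases mul_eq_zero.mp h3 with h4 | h4
    · have : (s:ZMod p) = -1 := by
        rw [← sub_zero ((s:ℕ):ZMod p), ← h4]; ring
      exact s_ne_neg_one p s hs0 hsp this
    · exact ha h4
  have hcards : A.card = B.card := by
    apply Finset.card_nbij (fun a => -a)
    · intro a ha
      simp only [hA, hB, hN, Finset.mem_coe, Finset.mem_filter, Finset.mem_univ, true_and] at ha ⊢
      obtain ⟨ha0, halt⟩ := ha
      refine ⟨neg_ne_zero.mpr ha0, ?_⟩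
      have := hsum a ha0
      omega
    · intro a ha b hb hab
      exact neg_injective hab
    · intro b hb
      simp only [hA, hB, hN, Finset.mem_coe, Finset.mem_filter, Finset.mem_univ, true_and,
        Set.mem_image] at hb ⊢
      obtain ⟨hb0, hbge⟩ := hb
      refine ⟨-b, ⟨neg_ne_zero.mpr hb0, ?_⟩, by simp⟩
      have h5 := hsum (-b) (neg_ne_zero.mpr hb0)
      rw [neg_neg] at h5
      have h6 : ((s:ZMod p)*(-b)) = -((s:ZMod p)*b) := by ring
      have h7 := hkey b hb0
      omega
  have htotal : A.card + B.card = N.card := Finset.card_filter_add_card_filter_not _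
  have hNcard : N.card = p - 1 := by
    rw [hN, Finset.filter_ne']
    rw [Finset.card_erase_of_mem (Finset.mem_univ 0), Finset.card_univ, ZMod.card]
  omega

end Final

theorem stmt11 (p s : ℕ) [Fact p.Prime] (hodd : Odd p) (hs0 : 0 < s) (hsp : s < p - 1) :
    (bPoly p 1 s).natDegree = (p - 1) / 2 ∧
    Polynomial.Splits (bPoly p 1 s) ∧
    Squarefree (bPoly p 1 s) := by
  have hp2 := (Fact.out : p.Prime).two_le
  have hp3 : 3 ≤ p := by
    rcases hodd with ⟨w, hw⟩
    omega
  have hspp : s < p := by omega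
  have hb0 : Polynomial.eval 0 (bPoly p 1 s) = 1 := eval_b_zero p s hodd hs0 hsp
  have hbne : bPoly p 1 s ≠ 0 := by
    intro h
    rw [h] at hb0
    simp at hb0
  have hdeg : (bPoly p 1 s).natDegree ≤ (p-1)/2 :=
    Polynomial.natDegree_le_iff_coeff_eq_zero.mpr (fun N hN => coeff_b p s hodd hs0 hspp N hN)
  set A := (Finset.univ.filter (fun a : ZMod p => a ≠ 0)).filter
      (fun a => a.val + ((s:ZMod p)*a).val < p) with hA
  have hcardA : A.card = (p-1)/2 := card_roots_set p s hodd hs0 hsp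
  have hsub : A ⊆ (bPoly p 1 s).roots.toFinset := by
    intro a ha
    simp only [hA, Finset.mem_filter, Finset.mem_univ, true_and] at ha
    rw [Multiset.mem_toFinset, Polynomial.mem_roots hbne]
    exact eval_b_root p s hs0 hspp a ha.1 ha.2
  have hchain1 : (p-1)/2 ≤ (bPoly p 1 s).roots.toFinset.card := by
    rw [← hcardA]
    exact Finset.card_le_card hsub
  have hchain2 : (bPoly p 1 s).roots.toFinset.card ≤ Multiset.card (bPoly p 1 s).roots :=
    Multiset.toFinset_card_le _
  have hchain3 : Multiset.card (bPoly p 1 s).roots ≤ (bPoly p 1 s).natDegree :=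
    Polynomial.card_roots' _
  have hdegeq : (bPoly p 1 s).natDegree = (p-1)/2 := by omega
  have hrooteq : Multiset.card (bPoly p 1 s).roots = (bPoly p 1 s).natDegree := by omega
  have hsplits : Polynomial.Splits (bPoly p 1 s) :=
    Polynomial.splits_iff_card_roots.mpr hrooteq
  have hnodup : (bPoly p 1 s).roots.Nodup := by
    rw [← Multiset.toFinset_card_eq_card_iff_nodup]
    omega
  have hsep : (bPoly p 1 s).Separable :=
    (Polynomial.nodup_roots_iff_of_splits hbne hsplits).mp hnodup
  exact ⟨hdegeq, hsplits, hsep.squarefree⟩
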